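/- Let p > 1 and let u be a C² solution of -u'' = xu - u^{p+1} on [0,∞) with u(0) = 0, u not identically 0, and 0 ≤ u(x) ≤ x^{1/p} for all x ≥ 0. Then u'(x) → 0 as x → ∞ and u' > 0 on [0,∞); in particular u is strictly increasing. -/

import Mathlib

open Filter

/-- A nontrivial solution of `-u'' = xu - u^{p+1}` on `[0,∞)` with `u(0)=0` and
`0 ≤ u ≤ x^{1/p}` satisfies `u' → 0` at `∞` and `u' > 0`; in particular `u` is
strictly increasing. -/
theorem stmt6 (p : ℝ) (hp : 1 < p) (u : ℝ → ℝ) (hu : ContDiff ℝ 2 u)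
    (heq : ∀ x ≥ (0:ℝ), -(deriv (deriv u) x) = x * u x - u x ^ (p + 1))
    (h0 : u 0 = 0) (hne : ∃ x ≥ (0:ℝ), u x ≠ 0)
    (hb : ∀ x ≥ (0:ℝ), 0 ≤ u x ∧ u x ≤ x ^ (1 / p)) :
    Tendsto (deriv u) atTop (nhds 0) ∧ (∀ x ≥ (0:ℝ), 0 < deriv u x) ∧
      StrictMonoOn u (Set.Ici 0) := by
  have hp0 : (0:ℝ) < p := lt_trans one_pos hp
  have hud : Differentiable ℝ u := hu.differentiable (by simp)
  have hud' : Differentiable ℝ (deriv u) := by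
    have h2 : ContDiff ℝ ((1:ℕ) + 1) u := by exact_mod_cast hu
    exact (contDiff_succ_iff_deriv.mp h2).2.2.differentiable (by simp)
  -- u'' ≤ 0 on the interior
  have hconc : ∀ x ∈ interior (Set.Ici (0:ℝ)), deriv (deriv u) x ≤ 0 := by
    intro x hx
    rw [interior_Ici] at hx
    have hxpos : (0:ℝ) < x := hx
    obtain ⟨hu0, hu1⟩ := hb x hxpos.le
    have h1 : u x ^ p ≤ x := by
      calc u x ^ p ≤ (x ^ (1/p)) ^ p := Real.rpow_le_rpow hu0 hu1 hp0.le
        _ = x ^ ((1/p) * p) := by rw [← Real.rpow_mul hxpos.le]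
        _ = x := by rw [one_div_mul_cancel hp0.ne', Real.rpow_one]
    have h2 : u x ^ (p + 1) ≤ x * u x := by
      rcases eq_or_lt_of_le hu0 with h | h
      · rw [← h, Real.zero_rpow (by positivity)]; simp
      · rw [Real.rpow_add h, Real.rpow_one]
        exact mul_le_mul_of_nonneg_right h1 hu0
    have := heq x hxpos.le
    linarith
  have hant : AntitoneOn (deriv u) (Set.Ici (0:ℝ)) :=
    antitoneOn_of_deriv_nonpos (convex_Ici 0) hud'.continuous.continuousOn
      hud'.differentiableOn hconc
  -- MVT
  have mvt : ∀ a b : ℝ, a < b → ∃ c, a < c ∧ c < b ∧ u b - u a = deriv u c * (b - a) := by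
    intro a b hab
    obtain ⟨c, hc, hs⟩ := exists_deriv_eq_slope u hab hud.continuous.continuousOn
      hud.differentiableOn
    have hba : b - a ≠ 0 := sub_ne_zero.mpr hab.ne'
    exact ⟨c, hc.1, hc.2, by rw [hs, div_mul_cancel₀ _ hba]⟩
  -- u' ≥ 0 on [0,∞)
  have hge : ∀ x ≥ (0:ℝ), 0 ≤ deriv u x := by
    intro x0 hx0
    by_contra hcon
    push_neg at hcon
    set δ : ℝ := -deriv u x0 with hδ
    have hδpos : 0 < δ := neg_pos.mpr hcon
    set b := x0 + u x0 / δ + 1 with hbdef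
    have hub0 : 0 ≤ u x0 := (hb x0 hx0).1
    have hb1 : x0 < b := by
      have : 0 ≤ u x0 / δ := div_nonneg hub0 hδpos.le
      simp only [hbdef]; linarith
    obtain ⟨c, hc1, hc2, hslope⟩ := mvt x0 b hb1
    have hcle : deriv u c ≤ deriv u x0 :=
      hant hx0 (le_trans hx0 hc1.le) hc1.le
    have hbge : 0 ≤ u b := (hb b (le_trans hx0 hb1.le)).1
    have hA : deriv u x0 = -δ := by simp only [hδ, neg_neg]
    have hexp : deriv u x0 * (b - x0) = -(u x0) - δ := by
      rw [hA, hbdef]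
      field_simp
      ring
    have hmul := mul_le_mul_of_nonneg_right hcle (by linarith : (0:ℝ) ≤ b - x0)
    linarith
  -- u' gets below any ε
  have hsmall : ∀ ε : ℝ, 0 < ε → ∃ N ≥ (0:ℝ), deriv u N < ε := by
    intro ε hε
    by_contra hcon
    push_neg at hcon
    have key : ∀ x : ℝ, 0 < x → ε * x ≤ u x := by
      intro x hx
      obtain ⟨c, hc1, hc2, hslope⟩ := mvt 0 x hx
      have := hcon c hc1.le
      rw [h0] at hslope
      nlinarith
    have hlim : Tendsto (fun x : ℝ => x ^ (1/p - 1)) atTop (nhds 0) := by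
      have h1 : (0:ℝ) < 1 - 1/p := by
        rw [sub_pos]
        rw [div_lt_one hp0]
        exact hp
      have := tendsto_rpow_neg_atTop h1
      simpa [neg_sub] using this
    obtain ⟨M, hM⟩ := (hlim.eventually (gt_mem_nhds hε)).exists_forall_of_atTop
    set x := max M 1 with hxdef
    have hx1 : (1:ℝ) ≤ x := le_max_right _ _
    have hxpos : (0:ℝ) < x := lt_of_lt_of_le one_pos hx1
    have h1 := key x hxpos
    have h2 := (hb x hxpos.le).2
    have h3 := hM x (le_max_left _ _)
    have h4 : x ^ (1/p) = x ^ (1/p - 1) * x := by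
      rw [← Real.rpow_add_one hxpos.ne']
      ring_nf
    nlinarith
  -- Tendsto
  have htend : Tendsto (deriv u) atTop (nhds 0) := by
    rw [Metric.tendsto_atTop]
    intro ε hε
    obtain ⟨N, hN0, hNε⟩ := hsmall ε hε
    refine ⟨N, fun x hx => ?_⟩
    have hx0 : (0:ℝ) ≤ x := le_trans hN0 hx
    have h1 : deriv u x ≤ deriv u N := hant hN0 hx0 hx
    have h2 : 0 ≤ deriv u x := hge x hx0
    rw [Real.dist_eq, abs_lt]
    constructor <;> [linarith; linarith]
  -- u' > 0
  have hpos : ∀ x ≥ (0:ℝ), 0 < deriv u x := by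
    intro x0 hx0
    rcases lt_or_eq_of_le (hge x0 hx0) with h | h
    · exact h
    exfalso
    have hzero : ∀ x ≥ x0, deriv u x = 0 := by
      intro x hx
      have h1 : deriv u x ≤ deriv u x0 := hant hx0 (le_trans hx0 hx) hx
      have h2 := hge x (le_trans hx0 hx)
      linarith [h.symm ▸ h1]
    have hconst : ∀ x ≥ x0, u x = u x0 := by
      intro x hx
      rcases eq_or_lt_of_le hx with rfl | hlt
      · rfl
      obtain ⟨c, hc1, hc2, hs⟩ := mvt x0 x hlt
      rw [hzero c hc1.le] at hs
      linarith
    have hdd : ∀ x > x0, deriv (deriv u) x = 0 := by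
      intro x hx
      have hev : deriv u =ᶠ[nhds x] (fun _ => (0:ℝ)) := by
        filter_upwards [Ioi_mem_nhds hx] with y hy using hzero y (le_of_lt hy)
      rw [hev.deriv_eq]
      exact deriv_const x 0
    have e1 := heq (x0+1) (by linarith)
    have e2 := heq (x0+2) (by linarith)
    rw [hdd (x0+1) (by linarith), hconst (x0+1) (by linarith)] at e1
    rw [hdd (x0+2) (by linarith), hconst (x0+2) (by linarith)] at e2
    have hc0 : u x0 = 0 := by linarith
    have hmono : MonotoneOn u (Set.Ici (0:ℝ)) :=
      monotoneOn_of_deriv_nonneg (convex_Ici 0) hud.continuous.continuousOn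
        hud.differentiableOn (fun x hx => by
          rw [interior_Ici] at hx; exact hge x (le_of_lt hx))
    obtain ⟨y, hy, hyne⟩ := hne
    apply hyne
    set z := max y x0 with hzdef
    have hz0 : (0:ℝ) ≤ z := le_trans hy (le_max_left _ _)
    have hzx0 : x0 ≤ z := le_max_right _ _
    have h1 : u y ≤ u z := hmono hy hz0 (le_max_left _ _)
    have h2 : u z = 0 := by rw [hconst z hzx0, hc0]
    have h3 : 0 ≤ u y := (hb y hy).1
    linarith
  refine ⟨htend, hpos, ?_⟩
  exact strictMonoOn_of_deriv_pos (convex_Ici 0) hud.continuous.continuousOn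
    (fun x hx => by rw [interior_Ici] at hx; exact hpos x (le_of_lt hx))
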